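/- If p has degree n ≥ 2, all roots in the closed unit disk, and z_1 is a root of p equal to the centroid of the roots of p, then p' has a root ζ with |ζ - z_1| ≤ 1. -/

import Mathlib

open Polynomial

-- sum of roots formula
lemma sum_roots_formula (f : ℂ[X]) (hf : f ≠ 0) (hd : f.natDegree ≠ 0) :
    f.roots.sum = -f.coeff (f.natDegree - 1) / f.leadingCoeff := by
  have hlc : f.leadingCoeff ≠ 0 := leadingCoeff_ne_zero.mpr hf
  set g := f * C f.leadingCoeff⁻¹ with hg
  have hmo : g.Monic := monic_mul_leadingCoeff_inv hf
  have hgd : g.natDegree = f.natDegree := natDegree_mul_C (inv_ne_zero hlc)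
  have hgroots : g.roots = f.roots := by
    rw [hg, mul_comm, roots_C_mul _ (inv_ne_zero hlc)]
  have := (IsAlgClosed.splits g).nextCoeff_eq_neg_sum_roots_of_monic hmo
  rw [hgroots] at this
  have hnc : g.nextCoeff = g.coeff (g.natDegree - 1) :=
    nextCoeff_of_natDegree_pos (by omega)
  rw [hnc, hgd, hg, coeff_mul_C] at this
  field_simp at this
  rw [this]
  field_simp

lemma gauss_lucas_disk (f : ℂ[X]) (hf : f ≠ 0) (hd : f.natDegree ≠ 0)
    (hroots : ∀ z ∈ f.roots, ‖z‖ ≤ 1) (ζ : ℂ) (hζ : f.derivative.IsRoot ζ) :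
    ‖ζ‖ ≤ 1 := by
  classical
  by_cases h0 : f.IsRoot ζ
  · exact hroots ζ ((mem_roots hf).mpr h0)
  set s := f.roots with hs
  have hcard : Multiset.card s = f.natDegree := by
    have := (IsAlgClosed.card_roots_eq_natDegree (p := f))
    simpa [Polynomial.map_id] using this
  have hfactor : C f.leadingCoeff * (s.map fun a => X - C a).prod = f :=
    C_leadingCoeff_mul_prod_multiset_X_sub_C hcard
  have hne : ∀ a ∈ s, ζ - a ≠ 0 := by
    intro a ha hza
    apply h0
    have : a ∈ f.roots := ha
    have : ζ = a := by linear_combination hza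
    rw [this]
    exact isRoot_of_mem_roots ha
  -- P = value of the product at ζ
  set P : ℂ := (s.map fun a => ζ - a).prod with hP
  have hPne : P ≠ 0 := by
    rw [hP]
    apply Multiset.prod_ne_zero
    intro h
    obtain ⟨a, ha, hza⟩ := Multiset.mem_map.mp h
    exact hne a ha hza
  -- derivative evaluated at ζ
  have hder : eval ζ (derivative f) = f.leadingCoeff * (s.map fun a =>
      ((s.erase a).map fun b => ζ - b).prod).sum := by
    conv_lhs => rw [← hfactor]
    rw [derivative_mul, derivative_C, zero_mul, zero_add, derivative_prod]
    rw [eval_mul, eval_C]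
    congr 1
    have e1 : eval ζ (Multiset.map (fun i => (Multiset.map (fun a => X - C a) (s.erase i)).prod * derivative (X - C i)) s).sum
        = (Multiset.map (fun i => eval ζ ((Multiset.map (fun a => X - C a) (s.erase i)).prod * derivative (X - C i))) s).sum := by
      rw [show (eval ζ : ℂ[X] → ℂ) = ⇑(evalRingHom ζ) from rfl, map_multiset_sum, Multiset.map_map]
      rfl
    rw [e1]
    apply congrArg
    apply Multiset.map_congr rfl
    intro a ha
    simp only [derivative_X_sub_C, mul_one, eval_mul, eval_one, eval_multiset_prod,
      Multiset.map_map]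
    apply congrArg
    apply Multiset.map_congr rfl
    intro b hb
    simp
  -- each erased product equals P * (ζ - a)⁻¹
  have herase : ∀ a ∈ s, ((s.erase a).map fun b => ζ - b).prod = P * (ζ - a)⁻¹ := by
    intro a ha
    have : (s.map fun b => ζ - b).prod = (ζ - a) * ((s.erase a).map fun b => ζ - b).prod := by
      conv_lhs => rw [← Multiset.cons_erase ha]
      rw [Multiset.map_cons, Multiset.prod_cons]
    rw [← hP] at this
    rw [this]
    field_simp [hne a ha]
  have hsum0 : (s.map fun a => (ζ - a)⁻¹).sum = 0 := by
    have h1 : eval ζ (derivative f) = 0 := hζ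
    rw [hder] at h1
    have hlc : f.leadingCoeff ≠ 0 := leadingCoeff_ne_zero.mpr hf
    have h2 : (s.map fun a => ((s.erase a).map fun b => ζ - b).prod).sum = 0 := by
      rcases mul_eq_zero.mp h1 with h | h
      · exact absurd h hlc
      · exact h
    rw [Multiset.map_congr rfl herase] at h2
    have h3 : (s.map fun a => P * (ζ - a)⁻¹).sum = P * (s.map fun a => (ζ - a)⁻¹).sum := by
      rw [← Multiset.sum_map_mul_left]
    rw [h3] at h2
    exact (mul_eq_zero.mp h2).resolve_left hPne
  -- weights
  set w : ℂ → ℝ := fun a => (Complex.normSq (ζ - a))⁻¹ with hw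
  have hwpos : ∀ a ∈ s, 0 < w a := fun a ha =>
    inv_pos.mpr (Complex.normSq_pos.mpr (hne a ha))
  have hconj : (s.map fun a => (ζ - a) * (w a : ℂ)).sum = 0 := by
    have := congrArg (starRingEnd ℂ) hsum0
    rw [map_multiset_sum, Multiset.map_map, map_zero] at this
    rw [← this]
    congr 1
    apply Multiset.map_congr rfl
    intro a ha
    simp only [Function.comp_apply, map_inv₀, Complex.inv_def, Complex.conj_conj,
      Complex.normSq_conj, map_mul, Complex.conj_ofReal, hw]
  -- rearrange: ζ * W = Σ w a * a
  have hW : (s.map fun a => ((w a : ℂ))).sum * ζ = (s.map fun a => (w a : ℂ) * a).sum := by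
    have : (s.map fun a => (ζ - a) * (w a : ℂ)).sum
        = (s.map fun a => (w a : ℂ) * ζ).sum - (s.map fun a => (w a : ℂ) * a).sum := by
      rw [← Multiset.sum_map_sub]
      apply congrArg
      apply Multiset.map_congr rfl
      intro a _; ring
    rw [this] at hconj
    have h4 : (s.map fun a => (w a : ℂ) * ζ).sum = (s.map fun a => ((w a : ℂ))).sum * ζ := by
      rw [← Multiset.sum_map_mul_right]
    rw [h4] at hconj
    linear_combination hconj
  set W : ℝ := (s.map w).sum with hWdef
  have hsne : s ≠ 0 := by
    intro h
    rw [h] at hcard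
    simp at hcard
    exact hd hcard.symm
  have hWpos : 0 < W := by
    have := Multiset.sum_lt_sum_of_nonempty (s := s) (f := fun _ => (0:ℝ)) (g := w)
      (by simpa using hsne) hwpos
    simpa using this
  have hcastW : (s.map fun a => ((w a : ℂ))).sum = (W : ℂ) := by
    rw [hWdef, show ((((s.map w).sum : ℝ)) : ℂ) = Complex.ofRealHom (s.map w).sum from rfl,
      map_multiset_sum, Multiset.map_map]
    rfl
  have hnorm : ‖ζ‖ * W ≤ W := by
    have h6 : ‖(s.map fun a => (w a : ℂ) * a).sum‖
        ≤ (s.map fun a => w a * ‖a‖).sum := by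
      have := norm_multiset_sum_le (s.map fun a => (w a : ℂ) * a)
      rw [Multiset.map_map] at this
      refine this.trans_eq ?_
      apply congrArg
      apply Multiset.map_congr rfl
      intro a ha
      simp [norm_mul, Complex.norm_real, Real.norm_eq_abs, abs_of_pos (hwpos a ha)]
    have h7 : (s.map fun a => w a * ‖a‖).sum ≤ W := by
      rw [hWdef]
      apply Multiset.sum_map_le_sum_map
      intro a ha
      calc w a * ‖a‖ ≤ w a * 1 := by
            exact mul_le_mul_of_nonneg_left (hroots a ha) (hwpos a ha).le
        _ = w a := mul_one _
    calc ‖ζ‖ * W = ‖(s.map fun a => (w a : ℂ) * a).sum‖ := by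
          rw [← hW, hcastW, norm_mul, Complex.norm_real, Real.norm_eq_abs, abs_of_pos hWpos, mul_comm]
      _ ≤ (s.map fun a => w a * ‖a‖).sum := h6
      _ ≤ W := h7
  calc ‖ζ‖ = ‖ζ‖ * W / W := by field_simp
    _ ≤ W / W := by apply div_le_div_of_nonneg_right hnorm hWpos.le
    _ = 1 := by field_simp

theorem stmt_10 (n : ℕ) (hn : 2 ≤ n) (p : ℂ[X]) (hdeg : p.natDegree = n)
    (hp : p ≠ 0)
    (hroots : ∀ z ∈ p.roots, ‖z‖ ≤ 1)
    (z₁ : ℂ) (hz₁ : p.IsRoot z₁) (hcent : z₁ = p.roots.sum / n) :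
    ∃ ζ : ℂ, p.derivative.IsRoot ζ ∧ ‖ζ - z₁‖ ≤ 1 := by
  classical
  have hd : p.natDegree ≠ 0 := by omega
  have hlc : p.leadingCoeff ≠ 0 := leadingCoeff_ne_zero.mpr hp
  have hncC : ((n : ℂ)) ≠ 0 := Nat.cast_ne_zero.mpr (by omega)
  -- derivative degree
  have hdegd : (derivative p).degree = ((n - 1 : ℕ) : WithBot ℕ) := by
    rw [← hdeg]
    exact degree_derivative_eq p (by omega)
  have hd0 : derivative p ≠ 0 := fun h => by
    rw [h, degree_zero] at hdegd
    exact absurd hdegd.symm (by simp)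
  have hdd : (derivative p).natDegree = n - 1 := natDegree_eq_of_degree_eq_some hdegd
  have hdd' : (derivative p).natDegree ≠ 0 := by omega
  -- sum of roots of p
  have hsp : p.roots.sum = -p.coeff (n - 1) / p.leadingCoeff := by
    rw [← hdeg]; exact sum_roots_formula p hp hd
  have hz₁sum : p.roots.sum = n * z₁ := by
    rw [hcent]; field_simp
  have hcoeff : p.coeff (n - 1) = -(p.leadingCoeff * n * z₁) := by
    rw [hz₁sum] at hsp
    field_simp at hsp
    linear_combination hsp
  -- leading coeff and next coeff of derivative
  have hc1 : ((n - 1 : ℕ) : ℂ) = (n : ℂ) - 1 := by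
    push_cast [Nat.cast_sub (by omega : 1 ≤ n)]
    ring
  have hc2 : ((n - 1 - 1 : ℕ) : ℂ) = (n : ℂ) - 2 := by
    push_cast [Nat.cast_sub (by omega : 1 ≤ n - 1), hc1]
    ring
  have h2 : p.coeff n = p.leadingCoeff := by rw [← hdeg, coeff_natDegree]
  have hlcd : (derivative p).leadingCoeff = p.leadingCoeff * n := by
    rw [leadingCoeff, hdd]
    have h1 : n - 1 + 1 = n := by omega
    rw [coeff_derivative, h1, h2, hc1]
    ring
  have hncd : (derivative p).coeff ((derivative p).natDegree - 1)
      = p.coeff (n - 1) * ((n : ℂ) - 1) := by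
    rw [hdd]
    have h1 : n - 1 - 1 + 1 = n - 1 := by omega
    rw [coeff_derivative, h1, hc2]
    ring
  -- sum of roots of derivative
  have hst : (derivative p).roots.sum = ((n : ℂ) - 1) * z₁ := by
    rw [sum_roots_formula _ hd0 hdd', hncd, hlcd, hcoeff]
    field_simp
  -- card of derivative roots
  set t := (derivative p).roots with ht
  have hcardt : Multiset.card t = n - 1 := by
    have := (IsAlgClosed.card_roots_eq_natDegree (p := derivative p))
    rw [ht, this, hdd]
  have htne : t ≠ 0 := by
    intro h
    rw [h] at hcardt
    simp at hcardt
    omega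
  have habs : ∀ ζ ∈ t, ‖ζ‖ ≤ 1 := fun ζ hζ =>
    gauss_lucas_disk p hp hd hroots ζ ((mem_roots hd0).mp hζ)
  have hz₁abs : ‖z₁‖ ≤ 1 := hroots z₁ ((mem_roots hp).mpr hz₁)
  by_contra hcon
  push_neg at hcon
  have hfar : ∀ ζ ∈ t, 1 < ‖ζ - z₁‖ := fun ζ hζ =>
    hcon ζ ((mem_roots hd0).mp hζ)
  -- the weighted sum
  set g : ℂ → ℝ := fun ζ => ((ζ - z₁) * (starRingEnd ℂ) z₁).re with hg
  have hgneg : ∀ ζ ∈ t, g ζ < 0 := by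
    intro ζ hζ
    have h1 : Complex.normSq ζ ≤ 1 := by
      have := habs ζ hζ
      rw [← Complex.sq_norm]
      nlinarith [norm_nonneg ζ]
    have h2 : 1 < Complex.normSq (ζ - z₁) := by
      have := hfar ζ hζ
      rw [← Complex.sq_norm]
      nlinarith [norm_nonneg (ζ - z₁)]
    have h3 : 2 * g ζ = Complex.normSq ζ - Complex.normSq z₁ - Complex.normSq (ζ - z₁) := by
      simp [hg, Complex.normSq_apply, Complex.mul_re, Complex.sub_re, Complex.sub_im]
      ring
    nlinarith [Complex.normSq_nonneg z₁]
  have hsumg : (t.map g).sum = 0 := by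
    have e1 : (t.map fun ζ => ζ - z₁).sum = 0 := by
      rw [Multiset.sum_map_sub (f := fun ζ : ℂ => ζ) (g := fun _ => z₁)]
      simp only [Multiset.map_id']
      rw [Multiset.map_const', Multiset.sum_replicate, hst, hcardt, nsmul_eq_mul, hc1]
      ring
    have e2 : (t.map fun ζ => (ζ - z₁) * (starRingEnd ℂ) z₁).sum = 0 := by
      rw [Multiset.sum_map_mul_right, e1, zero_mul]
    have e3 : (t.map g).sum = ((t.map fun ζ => (ζ - z₁) * (starRingEnd ℂ) z₁).sum).re := by
      rw [show (Complex.re : ℂ → ℝ) = ⇑Complex.reAddGroupHom from rfl, map_multiset_sum,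
        Multiset.map_map]
      rfl
    rw [e3, e2, Complex.zero_re]
  have hlt : (t.map g).sum < 0 := by
    have := Multiset.sum_lt_sum_of_nonempty (s := t) (f := g) (g := fun _ => (0:ℝ))
      (by simpa using htne) hgneg
    simpa using this
  rw [hsumg] at hlt
  exact lt_irrefl _ hlt
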